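/- In a smooth finite-dimensional normed space X of dimension n ≥ 2, if nonzero vectors x₁,…,x_{n−1} satisfy x_i ⊥ x_j for i < j, then the set of nonzero vectors y with x_i ⊥ y for all i spans a unique one-dimensional subspace. -/

import Mathlib

open Module

/-- James' characterization direction: if `x ⊥ y` (Birkhoff–James), there is a norming
functional of `x` vanishing at `y`. -/
theorem aux_james {𝕜 X : Type*} [RCLike 𝕜] [NormedAddCommGroup X] [NormedSpace 𝕜 X]
    {x y : X} (hx : x ≠ 0) (h : ∀ l : 𝕜, ‖x + l • y‖ ≥ ‖x‖) :
    ∃ g : X →L[𝕜] 𝕜, ‖g‖ = 1 ∧ g x = (‖x‖ : 𝕜) ∧ g y = 0 := by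
  by_cases hy : ∃ c : 𝕜, y = c • x
  · obtain ⟨c, rfl⟩ := hy
    rcases eq_or_ne c 0 with rfl | hc
    · obtain ⟨g, hg1, hg2⟩ := exists_dual_vector 𝕜 x (norm_ne_zero_iff.mpr hx)
      exact ⟨g, hg1, hg2, by simp⟩
    · exfalso
      have := h (-c⁻¹)
      have hz : x + (-c⁻¹) • c • x = 0 := by
        rw [smul_smul, neg_mul, inv_mul_cancel₀ hc]
        simp
      rw [hz, norm_zero] at this
      exact hx (norm_le_zero_iff.mp this)
  · have hli : LinearIndependent 𝕜 ![x, y] := by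
      rw [LinearIndependent.pair_iff]
      intro s t hst
      rcases eq_or_ne t 0 with rfl | ht
      · rw [zero_smul, add_zero, smul_eq_zero] at hst
        exact ⟨hst.resolve_right hx, rfl⟩
      · exfalso
        apply hy
        refine ⟨-t⁻¹ * s, ?_⟩
        have h2 : t • y = -(s • x) := by linear_combination (norm := module) hst
        have h3 : y = t⁻¹ • (t • y) := by rw [smul_smul, inv_mul_cancel₀ ht, one_smul]
        rw [h3, h2, mul_smul]
        module
    set p := Submodule.span 𝕜 (Set.range ![x, y]) with hp
    let b : Basis (Fin 2) 𝕜 p := Basis.span hli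
    have hb0 : (b 0 : X) = x := by rw [Basis.span_apply]; rfl
    have hb1 : (b 1 : X) = y := by rw [Basis.span_apply]; rfl
    let f₀ : p →ₗ[𝕜] 𝕜 := b.constr 𝕜 ![(‖x‖ : 𝕜), 0]
    have hf00 : f₀ (b 0) = (‖x‖ : 𝕜) := by rw [Basis.constr_basis]; rfl
    have hf01 : f₀ (b 1) = 0 := by rw [Basis.constr_basis]; rfl
    have hrange : Set.range ![x, y] = {x, y} := by
      ext v; simp [Matrix.range_cons, Matrix.range_empty]; tauto
    have hbound : ∀ z : p, ‖f₀ z‖ ≤ 1 * ‖(z : X)‖ := by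
      intro z
      have hz : (z : X) ∈ Submodule.span 𝕜 ({x, y} : Set X) := by
        rw [← hrange]; exact z.2
      obtain ⟨a, c, hac⟩ := Submodule.mem_span_pair.mp hz
      have hzeq : z = a • b 0 + c • b 1 := by
        apply Subtype.ext
        push_cast [hb0, hb1]
        exact hac.symm
      have hfz : f₀ z = a * (‖x‖ : 𝕜) := by
        rw [hzeq, map_add, map_smul, map_smul, hf00, hf01, smul_eq_mul, smul_eq_mul]
        ring
      rw [hfz, one_mul, ← hac]
      rcases eq_or_ne a 0 with rfl | ha
      · simp
      · have key : a • x + c • y = a • (x + (a⁻¹ * c) • y) := by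
          rw [smul_add, smul_smul, mul_inv_cancel_left₀ ha]
        rw [key, norm_mul, norm_smul]
        gcongr
        · rw [RCLike.norm_ofReal, abs_norm]
          exact h (a⁻¹ * c)
    let F : p →L[𝕜] 𝕜 := f₀.mkContinuous 1 hbound
    obtain ⟨g, hg, hgnorm⟩ := exists_extension_norm_eq p F
    have hFb0 : F (b 0) = (‖x‖ : 𝕜) := hf00
    have hFb1 : F (b 1) = 0 := hf01
    have hgx : g x = (‖x‖ : 𝕜) := by
      have := hg (b 0)
      rwa [hb0, hFb0] at this
    have hgy : g y = 0 := by
      have := hg (b 1)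
      rwa [hb1, hFb1] at this
    refine ⟨g, ?_, hgx, hgy⟩
    rw [hgnorm]
    apply le_antisymm
    · exact f₀.mkContinuous_norm_le zero_le_one hbound
    · have hxnorm : (0:ℝ) < ‖x‖ := norm_pos_iff.mpr hx
      have hb0norm : ‖b 0‖ = ‖x‖ := by
        rw [show ‖b 0‖ = ‖(b 0 : X)‖ from rfl, hb0]
      have h1 := F.le_opNorm (b 0)
      rw [hFb0, RCLike.norm_ofReal, abs_norm, hb0norm] at h1
      nlinarith

/-- In a smooth space, Birkhoff–James orthogonality is characterized by the kernel of the
unique norming functional. -/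
theorem aux_orth_iff {𝕜 X : Type*} [RCLike 𝕜] [NormedAddCommGroup X] [NormedSpace 𝕜 X]
    {x : X} (hx : x ≠ 0) {f : X →L[𝕜] 𝕜} (hf : ‖f‖ = 1 ∧ f x = (‖x‖ : 𝕜))
    (huniq : ∀ g : X →L[𝕜] 𝕜, (‖g‖ = 1 ∧ g x = (‖x‖ : 𝕜)) → g = f) (y : X) :
    (∀ l : 𝕜, ‖x + l • y‖ ≥ ‖x‖) ↔ f y = 0 := by
  constructor
  · intro h
    obtain ⟨g, hg1, hg2, hg3⟩ := aux_james hx h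
    rw [← huniq g ⟨hg1, hg2⟩]
    exact hg3
  · intro h0 l
    have h1 : f (x + l • y) = (‖x‖ : 𝕜) := by
      rw [map_add, map_smul, h0, smul_zero, add_zero, hf.2]
    have h2 := f.le_opNorm (x + l • y)
    rw [hf.1, one_mul, h1, RCLike.norm_ofReal, abs_norm] at h2
    exact h2

theorem stmt_9 {𝕜 X : Type*} [RCLike 𝕜] [NormedAddCommGroup X] [NormedSpace 𝕜 X]
    [FiniteDimensional 𝕜 X] {n : ℕ} (hn : 2 ≤ n) (hdim : Module.finrank 𝕜 X = n)
    (hsmooth : ∀ x : X, x ≠ 0 → ∃! f : X →L[𝕜] 𝕜, ‖f‖ = 1 ∧ f x = (‖x‖ : 𝕜))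
    (x : Fin (n - 1) → X) (hx0 : ∀ i, x i ≠ 0)
    (hperp : ∀ i j, i < j → ∀ l : 𝕜, ‖x i + l • x j‖ ≥ ‖x i‖) :
    ∃ z : X, z ≠ 0 ∧ ∀ y : X,
      (y ≠ 0 ∧ ∀ i, ∀ l : 𝕜, ‖x i + l • y‖ ≥ ‖x i‖) ↔
        ∃ c : 𝕜, c ≠ 0 ∧ y = c • z := by
  choose f hf using fun i => hsmooth (x i) (hx0 i)
  have horthiff : ∀ i (y : X), (∀ l : 𝕜, ‖x i + l • y‖ ≥ ‖x i‖) ↔ f i y = 0 :=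
    fun i y => aux_orth_iff (hx0 i) (hf i).1 (hf i).2 y
  have horth : ∀ i j, i < j → f i (x j) = 0 :=
    fun i j hij => (horthiff i (x j)).mp (hperp i j hij)
  let g : Fin (n - 1) → Module.Dual 𝕜 X := fun i => (f i : X →ₗ[𝕜] 𝕜)
  have hgli : LinearIndependent 𝕜 g := by
    rw [Fintype.linearIndependent_iff]
    intro c hc
    have key : ∀ k : ℕ, ∀ j : Fin (n - 1), n - 1 - (j : ℕ) ≤ k → c j = 0 := by
      intro k
      induction k with
      | zero =>
        intro j hj
        exfalso
        have := j.2
        omega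
      | succ k ih =>
        intro j hj
        have hsum : ∑ i, c i * f i (x j) = 0 := by
          have := congrArg (fun φ : Module.Dual 𝕜 X => φ (x j)) hc
          simpa [smul_eq_mul, g] using this
        have hsingle : ∑ i, c i * f i (x j) = c j * f j (x j) := by
          apply Finset.sum_eq_single
          · intro i _ hne
            rcases lt_or_gt_of_ne hne with hlt | hgt
            · rw [horth i j hlt, mul_zero]
            · have hji : (j : ℕ) < (i : ℕ) := hgt
              have hi2 := i.2
              rw [ih i (by omega), zero_mul]
          · intro habs
            exact absurd (Finset.mem_univ j) habs
        rw [hsingle, (hf j).1.2] at hsum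
        have hxn : ((‖x j‖ : ℝ) : 𝕜) ≠ 0 :=
          RCLike.ofReal_ne_zero.mpr (norm_ne_zero_iff.mpr (hx0 j))
        exact (mul_eq_zero.mp hsum).resolve_right hxn
    intro j
    exact key (n - 1) j (Nat.sub_le _ _)
  have hcard : Module.finrank 𝕜 (Submodule.span 𝕜 (Set.range g)) = n - 1 := by
    rw [finrank_span_eq_card hgli, Fintype.card_fin]
  set W := (Submodule.span 𝕜 (Set.range g)).dualCoannihilator with hW
  have hWrank : Module.finrank 𝕜 W = 1 := by
    have h1 := Subspace.finrank_add_finrank_dualCoannihilator_eq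
      (Submodule.span 𝕜 (Set.range g))
    rw [← hW, hcard, hdim] at h1
    omega
  have hmemW : ∀ y : X, y ∈ W ↔ ∀ i, f i y = 0 := by
    intro y
    rw [hW, Submodule.mem_dualCoannihilator]
    constructor
    · intro h i
      exact h (g i) (Submodule.subset_span ⟨i, rfl⟩)
    · intro h φ hφ
      induction hφ using Submodule.span_induction with
      | mem ψ hψ => obtain ⟨i, rfl⟩ := hψ; exact h i
      | zero => simp
      | add φ ψ _ _ h1 h2 => simp [h1, h2]
      | smul a φ _ h1 => simp [h1]
  obtain ⟨v, hv0, hvspan⟩ := finrank_eq_one_iff'.mp hWrank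
  have hz0 : (v : X) ≠ 0 := by simpa using hv0
  refine ⟨(v : X), hz0, ?_⟩
  intro y
  constructor
  · rintro ⟨hy0, hyperp⟩
    have hyW : y ∈ W := (hmemW y).mpr fun i => (horthiff i y).mp (hyperp i)
    obtain ⟨c, hc⟩ := hvspan ⟨y, hyW⟩
    have hyc : y = c • (v : X) := by
      have := congrArg (fun w : W => (w : X)) hc
      simpa using this.symm
    refine ⟨c, ?_, hyc⟩
    rintro rfl
    rw [zero_smul] at hyc
    exact hy0 hyc
  · rintro ⟨c, hc0, rfl⟩
    refine ⟨smul_ne_zero hc0 hz0, fun i => (horthiff i _).mpr ?_⟩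
    rw [map_smul, (hmemW _).mp v.2 i, smul_zero]
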